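/- Suppose the decreasing rearrangement x^↓ of x ∈ ℝ^n lies in Γ_k^n, with x_1 ≥ ... ≥ x_n. Then there exists a constant C depending only on n and k such that x_k ≤ C·(s_k(x)^{1/k} + |x_n|). -/
import Mathlib


open Finset

/-- The `k`-th elementary symmetric polynomial of `x ∈ ℝⁿ`. -/
noncomputable def esymm (n k : ℕ) (x : Fin n → ℝ) : ℝ :=
  ∑ A ∈ Finset.powersetCard k (Finset.univ : Finset (Fin n)), ∏ i ∈ A, x i

/-- The Gårding cone `Γₖⁿ = {x : sₗ(x) > 0, l = 1,…,k}`. -/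
def GammaK (n k : ℕ) (x : Fin n → ℝ) : Prop :=
  ∀ l, 1 ≤ l → l ≤ k → 0 < esymm n l x

lemma strictMono_le_val {t : ℕ} (g : Fin t → ℕ) (hg : StrictMono g) :
    ∀ v (hv : v < t), v ≤ g ⟨v, hv⟩ := by
  intro v
  induction v with
  | zero => intro hv; exact Nat.zero_le _
  | succ i ih =>
    intro hv
    have hi : i < t := Nat.lt_of_succ_lt hv
    have h1 := ih hi
    have h2 : g ⟨i, hi⟩ < g ⟨i + 1, hv⟩ := hg (by simp [Fin.lt_def])
    omega

lemma prod_subset_le_head {n : ℕ} (x : Fin n → ℝ) (hx : Antitone x)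
    (B : Finset (Fin n)) (hB : ∀ i ∈ B, 0 ≤ x i) (ht : B.card ≤ n) :
    ∏ i ∈ B, x i ≤ ∏ r : Fin B.card, x (Fin.castLE ht r) := by
  have hmap : (Finset.univ.map (B.orderEmbOfFin rfl).toEmbedding) = B := by
    ext i
    simp only [Finset.mem_map, Finset.mem_univ, true_and]
    constructor
    · rintro ⟨r, rfl⟩; exact B.orderEmbOfFin_mem rfl r
    · intro hi
      have : i ∈ Set.range (B.orderEmbOfFin rfl) := by
        rw [Finset.range_orderEmbOfFin]; exact hi
      obtain ⟨r, hr⟩ := this; exact ⟨r, hr⟩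
  have h1 : ∏ i ∈ B, x i = ∏ r : Fin B.card, x (B.orderEmbOfFin rfl r) := by
    conv_lhs => rw [← hmap]
    rw [Finset.prod_map]
    rfl
  rw [h1]
  apply Finset.prod_le_prod
  · intro r _
    exact hB _ (B.orderEmbOfFin_mem rfl r)
  · intro r _
    apply hx
    have hsm : StrictMono (fun s : Fin B.card => ((B.orderEmbOfFin rfl s : Fin n) : ℕ)) := by
      intro a b hab
      exact (B.orderEmbOfFin rfl).strictMono hab
    have := strictMono_le_val _ hsm r r.isLt
    simpa [Fin.le_def] using this

lemma filter_lt_eq_map {n m : ℕ} (hm : m ≤ n) :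
    (Finset.univ : Finset (Fin n)).filter (fun i : Fin n => (i : ℕ) < m)
      = Finset.univ.map (Fin.castLEEmb hm) := by
  ext i
  simp only [Finset.mem_filter, Finset.mem_univ, true_and, Finset.mem_map]
  constructor
  · intro hi
    exact ⟨⟨i, hi⟩, rfl⟩
  · rintro ⟨r, rfl⟩
    simp [Fin.castLEEmb] 


/-- For decreasing x with x ∈ Γₖⁿ : x_k ≤ C·(s_k(x)^{1/k} + |x_n|). -/
theorem xk_upper_bound (n k : ℕ) (hn : 0 < n) (hk : 1 ≤ k) (hkn : k ≤ n) :
    ∃ C : ℝ, 0 < C ∧ ∀ x : Fin n → ℝ, Antitone x → GammaK n k x →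
      x ⟨k - 1, by omega⟩ ≤
        C * ((esymm n k x) ^ ((1 : ℝ) / (k : ℝ)) + |x ⟨n - 1, by omega⟩|) := by
  
  refine ⟨2 ^ (n + 1) + 2, by positivity, ?_⟩
  intro x hx hΓ
  have hσk : 0 < esymm n k x := hΓ k hk le_rfl
  set σ : ℝ := esymm n k x with hσdef
  set K : Fin n := ⟨k - 1, by omega⟩ with hKdef
  set L : Fin n := ⟨n - 1, by omega⟩ with hLdef
  set M : ℝ := |x L| with hMdef
  have hM0 : 0 ≤ M := abs_nonneg _
  have hrpow0 : 0 ≤ σ ^ ((1 : ℝ) / (k : ℝ)) := Real.rpow_nonneg hσk.le _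
  have h2pos : (0 : ℝ) < 2 ^ (n + 1) := by positivity
  by_cases hcase : x K ≤ 2 ^ (n + 1) * M
  · nlinarith [hrpow0, hM0, h2pos]
  · push_neg at hcase
    have hK0 : 0 < x K := lt_of_le_of_lt (by positivity) hcase
    have hhead : ∀ i : Fin n, (i : ℕ) < k → x K ≤ x i := by
      intro i hi
      apply hx
      rw [Fin.le_def]
      simp only [hKdef]
      omega
    have hlow : ∀ i : Fin n, -M ≤ x i := by
      intro i
      have h1 : x L ≤ x i := by
        apply hx
        rw [Fin.le_def]
        simp only [hLdef]
        omega
      have := neg_abs_le (x L)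
      rw [← hMdef] at this
      linarith
    set P : ℝ := ∏ r : Fin k, x (Fin.castLE hkn r) with hPdef
    have hPfacpos : ∀ r : Fin k, 0 < x (Fin.castLE hkn r) := fun r =>
      lt_of_lt_of_le hK0 (hhead _ r.isLt)
    have hP0 : 0 < P := Finset.prod_pos (fun r _ => hPfacpos r)
    have hPk : x K ^ k ≤ P := by
      calc x K ^ k = ∏ _r : Fin k, x K := by
            rw [Finset.prod_const, Finset.card_univ, Fintype.card_fin]
        _ ≤ P := Finset.prod_le_prod (fun r _ => hK0.le) (fun r _ => hhead _ r.isLt)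
    -- per term bound
    have hterm : ∀ A ∈ Finset.powersetCard k (Finset.univ : Finset (Fin n)),
        -(P / 2 ^ (n + 1)) ≤ ∏ i ∈ A, x i := by
      intro A hA
      have hAcard : A.card = k := (Finset.mem_powersetCard.mp hA).2
      have hPdiv0 : 0 ≤ P / 2 ^ (n + 1) := by positivity
      by_cases hneg : ∀ i ∈ A, 0 ≤ x i
      · have := Finset.prod_nonneg hneg
        linarith
      · push_neg at hneg
        obtain ⟨i0, hi0A, hi0⟩ := hneg
        classical
        set Pp := A.filter (fun i => 0 ≤ x i) with hPpdef
        set Np := A.filter (fun i => ¬ 0 ≤ x i) with hNpdef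
        have hsplit : (∏ i ∈ Pp, x i) * (∏ i ∈ Np, x i) = ∏ i ∈ A, x i :=
          Finset.prod_filter_mul_prod_filter_not A _ _
        have hcards : Pp.card + Np.card = k := by
          rw [hPpdef, hNpdef, Finset.card_filter_add_card_filter_not, hAcard]
        set j := Np.card with hjdef
        have hj1 : 1 ≤ j := by
          rw [hjdef, hNpdef]
          exact Finset.card_pos.mpr ⟨i0, Finset.mem_filter.mpr ⟨hi0A, not_le.mpr hi0⟩⟩
        have hPp0 : 0 ≤ ∏ i ∈ Pp, x i :=
          Finset.prod_nonneg (fun i hi => (Finset.mem_filter.mp hi).2)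
        have hNpabs : |∏ i ∈ Np, x i| ≤ M ^ j := by
          rw [Finset.abs_prod]
          calc ∏ i ∈ Np, |x i| ≤ ∏ _i ∈ Np, M := by
                apply Finset.prod_le_prod (fun i _ => abs_nonneg _)
                intro i hi
                have h2 := (Finset.mem_filter.mp hi).2
                exact abs_le.mpr ⟨hlow i, le_trans (le_of_not_ge h2) hM0⟩
            _ = M ^ j := by rw [Finset.prod_const, hjdef]
        have ht : Pp.card ≤ n := le_trans (by omega) hkn
        have hQle := prod_subset_le_head x hx Pp (fun i hi => (Finset.mem_filter.mp hi).2) ht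
        set t := Pp.card with htdef
        set Q : ℝ := ∏ r : Fin t, x (Fin.castLE ht r) with hQdef
        have htk : t ≤ k := by omega
        have hQ0 : 0 ≤ Q := by
          apply Finset.prod_nonneg
          intro r _
          have hrk : ((Fin.castLE ht r : Fin n) : ℕ) < k := lt_of_lt_of_le r.isLt htk
          exact (lt_of_lt_of_le hK0 (hhead _ hrk)).le
        have hsplitP : Q * (∏ r ∈ (Finset.univ : Finset (Fin k)).filter
            (fun r : Fin k => ¬ ((r : ℕ) < t)), x (Fin.castLE hkn r)) = P := by
          rw [hPdef, ← Finset.prod_filter_mul_prod_filter_not (Finset.univ : Finset (Fin k))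
            (fun r : Fin k => (r : ℕ) < t) (fun r => x (Fin.castLE hkn r))]
          congr 1
          rw [filter_lt_eq_map htk, Finset.prod_map, hQdef]
          rfl
        have hcardrest : ((Finset.univ : Finset (Fin k)).filter
            (fun r : Fin k => ¬ ((r : ℕ) < t))).card = j := by
          have h1 := Finset.card_filter_add_card_filter_not
            (s := (Finset.univ : Finset (Fin k))) (p := fun r : Fin k => (r : ℕ) < t)
          have h2 : ((Finset.univ : Finset (Fin k)).filter
              (fun r : Fin k => (r : ℕ) < t)).card = t := by
            rw [filter_lt_eq_map htk, Finset.card_map, Finset.card_univ, Fintype.card_fin]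
          rw [Finset.card_univ, Fintype.card_fin] at h1
          omega
        have hrest : x K ^ j ≤ ∏ r ∈ (Finset.univ : Finset (Fin k)).filter
            (fun r : Fin k => ¬ ((r : ℕ) < t)), x (Fin.castLE hkn r) := by
          have h0 : (∏ _r ∈ (Finset.univ : Finset (Fin k)).filter
              (fun r : Fin k => ¬ ((r : ℕ) < t)), x K) = x K ^ j := by
            rw [Finset.prod_const, hcardrest]
          rw [← h0]
          exact Finset.prod_le_prod (fun r _ => hK0.le) (fun r _ => hhead _ r.isLt)
        have habs : |∏ i ∈ A, x i| ≤ Q * M ^ j := by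
          rw [← hsplit, abs_mul, abs_of_nonneg hPp0]
          exact mul_le_mul hQle hNpabs (abs_nonneg _) hQ0
        have hpow : 2 ^ (n + 1) * M ^ j ≤ x K ^ j := by
          have h1 : (2 ^ (n + 1) * M) ^ j ≤ x K ^ j :=
            pow_le_pow_left₀ (by positivity) hcase.le j
          rw [mul_pow, ← pow_mul] at h1
          have h2 : (2 : ℝ) ^ (n + 1) ≤ 2 ^ ((n + 1) * j) := by
            apply pow_le_pow_right₀ one_le_two
            exact Nat.le_mul_of_pos_right _ hj1
          nlinarith [pow_nonneg hM0 j]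
        have hQxK : Q * x K ^ j ≤ P := by
          rw [← hsplitP]
          exact mul_le_mul_of_nonneg_left hrest hQ0
        have hfinal : 2 ^ (n + 1) * |∏ i ∈ A, x i| ≤ P := by
          calc 2 ^ (n + 1) * |∏ i ∈ A, x i| ≤ 2 ^ (n + 1) * (Q * M ^ j) :=
                mul_le_mul_of_nonneg_left habs h2pos.le
            _ = Q * (2 ^ (n + 1) * M ^ j) := by ring
            _ ≤ Q * x K ^ j := mul_le_mul_of_nonneg_left hpow hQ0
            _ ≤ P := hQxK
        have habs2 : |∏ i ∈ A, x i| ≤ P / 2 ^ (n + 1) := by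
          rw [le_div_iff₀ h2pos]
          linarith
        linarith [neg_abs_le (∏ i ∈ A, x i)]
    -- sum assembly
    have hHalf : P / 2 ≤ σ := by
      classical
      set S := Finset.powersetCard k (Finset.univ : Finset (Fin n)) with hSdef
      set H : Finset (Fin n) := Finset.univ.map (Fin.castLEEmb hkn) with hHdef
      have hHcard : H.card = k := by
        rw [hHdef, Finset.card_map, Finset.card_univ, Fintype.card_fin]
      have hHmem : H ∈ S := by
        rw [hSdef, Finset.mem_powersetCard]
        exact ⟨Finset.subset_univ _, hHcard⟩
      have hPH : ∏ i ∈ H, x i = P := by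
        rw [hHdef, Finset.prod_map, hPdef]
        rfl
      have hsum : ∏ i ∈ H, x i + ∑ A ∈ S.erase H, ∏ i ∈ A, x i = σ := by
        show ∏ i ∈ H, x i + ∑ A ∈ S.erase H, ∏ i ∈ A, x i = esymm n k x
        unfold esymm
        exact Finset.add_sum_erase S (fun A => ∏ i ∈ A, x i) hHmem
      have hcarderase : ((S.erase H).card : ℝ) ≤ 2 ^ n := by
        have h1 : (S.erase H).card ≤ S.card := Finset.card_erase_le
        have h2 : S.card ≤ (Finset.univ : Finset (Fin n)).powerset.card := by
          apply Finset.card_le_card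
          intro A hA
          exact Finset.mem_powerset.mpr (Finset.mem_powersetCard.mp hA).1
        rw [Finset.card_powerset, Finset.card_univ, Fintype.card_fin] at h2
        have : (S.erase H).card ≤ 2 ^ n := le_trans h1 h2
        exact_mod_cast this
      have hsumlb : (S.erase H).card • (-(P / 2 ^ (n + 1))) ≤ ∑ A ∈ S.erase H, ∏ i ∈ A, x i :=
        Finset.card_nsmul_le_sum _ _ _ (fun A hA => hterm A (Finset.mem_of_mem_erase hA))
      rw [nsmul_eq_mul] at hsumlb
      have hd : (2 : ℝ) ^ (n + 1) * (P / 2 ^ (n + 1)) = P := by field_simp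
      have hp2 : (2 : ℝ) ^ (n + 1) = 2 ^ n * 2 := pow_succ 2 n
      have hd0 : 0 ≤ P / 2 ^ (n + 1) := by positivity
      nlinarith [hsumlb, hcarderase, hP0, hsum, hPH, hd, hd0,
        mul_le_mul_of_nonneg_right hcarderase hd0]
    have h2σ : x K ^ k ≤ 2 * σ := by nlinarith
    -- rpow endgame
    have hkR : (0 : ℝ) < (k : ℝ) := by exact_mod_cast hk
    have hfin : x K ≤ 2 * σ ^ ((1 : ℝ) / (k : ℝ)) := by
      have h1 : x K = (x K ^ k) ^ ((1 : ℝ) / (k : ℝ)) := by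
        rw [← Real.rpow_natCast (x K) k, ← Real.rpow_mul hK0.le,
          mul_one_div, div_self (ne_of_gt hkR), Real.rpow_one]
      rw [h1]
      calc (x K ^ k) ^ ((1 : ℝ) / (k : ℝ)) ≤ (2 * σ) ^ ((1 : ℝ) / (k : ℝ)) :=
            Real.rpow_le_rpow (by positivity) h2σ (by positivity)
        _ = 2 ^ ((1 : ℝ) / (k : ℝ)) * σ ^ ((1 : ℝ) / (k : ℝ)) :=
            Real.mul_rpow (by norm_num) hσk.le
        _ ≤ 2 * σ ^ ((1 : ℝ) / (k : ℝ)) := by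
            have h2 : (2 : ℝ) ^ ((1 : ℝ) / (k : ℝ)) ≤ 2 ^ (1 : ℝ) := by
              apply Real.rpow_le_rpow_of_exponent_le one_le_two
              rw [div_le_one hkR]
              exact_mod_cast hk
            rw [Real.rpow_one] at h2
            nlinarith [hrpow0]
    have e1 : 0 ≤ 2 ^ (n + 1) * (σ ^ ((1 : ℝ) / (k : ℝ))) := mul_nonneg h2pos.le hrpow0
    have e2 : 0 ≤ 2 ^ (n + 1) * M := mul_nonneg h2pos.le hM0
    linarith [hfin, hrpow0, hM0, e1, e2]
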